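/- Suppose a rational function α over a field F satisfies α(x)α(y) = α(x/y)α(y) + α(x)α(y/x) (as rational functions in x, y) and α is not identically zero. Then α has no nonzero root: if α(d) = 0 for some d ≠ 0 in F (at which α is defined), then contradiction follows from α(d/y)α(y) = 0 as a rational function in y. -/

import Mathlib

noncomputable section

/-- Substitution of α ∈ F(x) at an element t of F(x,y) = RatFunc (RatFunc F). -/
def sub {F : Type*} [Field F] (a : RatFunc F) (t : RatFunc (RatFunc F)) : RatFunc (RatFunc F) :=
  RatFunc.eval ((RatFunc.C).comp (RatFunc.C)) t a

open Polynomial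

namespace AlphaAux

variable {F : Type*} [Field F]

/-- The canonical injection F[X][Y] → RatFunc (RatFunc F). -/
def ι (F : Type*) [Field F] : Polynomial (Polynomial F) →+* RatFunc (RatFunc F) :=
  (algebraMap (Polynomial (RatFunc F)) (RatFunc (RatFunc F))).comp
    (Polynomial.mapRingHom (algebraMap (Polynomial F) (RatFunc F)))

lemma ι_injective : Function.Injective (ι F) :=
  (RatFunc.algebraMap_injective _).comp
    (Polynomial.map_injective _ (RatFunc.algebraMap_injective F))

lemma ι_C (r : Polynomial F) :
    ι F (Polynomial.C r) = RatFunc.C (algebraMap (Polynomial F) (RatFunc F) r) := by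
  simp [ι, RatFunc.algebraMap_C]

lemma ι_X : ι F Polynomial.X = RatFunc.X := by
  simp [ι, RatFunc.algebraMap_X]

lemma inner_comp :
    (algebraMap (Polynomial F) (RatFunc F)).comp (Polynomial.C : F →+* Polynomial F)
      = RatFunc.C := RingHom.ext fun a => RatFunc.algebraMap_C a

/-- eval₂ at the canonical inclusions gives the algebraMap. -/
lemma eval₂_CX (p : Polynomial F) :
    p.eval₂ RatFunc.C RatFunc.X = algebraMap (Polynomial F) (RatFunc F) p := by
  have h := Polynomial.hom_eval₂ p (Polynomial.C : F →+* Polynomial F)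
    (algebraMap (Polynomial F) (RatFunc F)) Polynomial.X
  rw [Polynomial.eval₂_C_X] at h
  rw [h, inner_comp, RatFunc.algebraMap_X]

end AlphaAux

namespace AlphaAux

variable {F : Type*} [Field F]

/-- The coefficient embedding F → RatFunc (RatFunc F). -/
def φ (F : Type*) [Field F] : F →+* RatFunc (RatFunc F) :=
  (RatFunc.C).comp (RatFunc.C)

lemma eval₂_at_x (p : Polynomial F) :
    p.eval₂ (φ F) (RatFunc.C RatFunc.X) = ι F (Polynomial.C p) := by
  have h := Polynomial.hom_eval₂ p (RatFunc.C : F →+* RatFunc F)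
    (RatFunc.C : RatFunc F →+* RatFunc (RatFunc F)) RatFunc.X
  rw [eval₂_CX] at h
  rw [φ, ← h, ι_C]

lemma eval₂_at_y (p : Polynomial F) :
    p.eval₂ (φ F) RatFunc.X = ι F (p.map Polynomial.C) := by
  have h1 : p.eval₂ (φ F) (RatFunc.X : RatFunc (RatFunc F))
      = (p.map (RatFunc.C : F →+* RatFunc F)).eval₂ RatFunc.C RatFunc.X := by
    rw [Polynomial.eval₂_map]; rfl
  rw [h1, eval₂_CX]
  simp [ι, Polynomial.map_map, inner_comp]

end AlphaAux

namespace AlphaAux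

variable {F : Type*} [Field F]

/-- Homogenization Σ p_i X^i Y^(m-i), representing p(x/y)·y^m. -/
def homog (p : Polynomial F) (m : ℕ) : Polynomial (Polynomial F) :=
  ∑ i ∈ Finset.range (m + 1),
    Polynomial.C (Polynomial.C (p.coeff i) * Polynomial.X ^ i) * Polynomial.X ^ (m - i)

/-- Homogenization Σ p_i Y^i X^(m-i), representing p(y/x)·x^m. -/
def homog' (p : Polynomial F) (m : ℕ) : Polynomial (Polynomial F) :=
  ∑ i ∈ Finset.range (m + 1),
    Polynomial.C (Polynomial.C (p.coeff i) * Polynomial.X ^ (m - i)) * Polynomial.X ^ i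

lemma homog_coeff (p : Polynomial F) {m i : ℕ} (hi : i ≤ m) :
    (homog p m).coeff (m - i) = Polynomial.C (p.coeff i) * Polynomial.X ^ i := by
  rw [homog, Polynomial.finset_sum_coeff]
  rw [Finset.sum_eq_single i]
  · rw [Polynomial.coeff_C_mul, Polynomial.coeff_X_pow, if_pos rfl, mul_one]
  · intro j hj hji
    rw [Polynomial.coeff_C_mul, Polynomial.coeff_X_pow, if_neg, mul_zero]
    simp only [Finset.mem_range] at hj
    omega
  · intro h
    exact absurd (Finset.mem_range.2 (by omega)) h

lemma homog'_coeff (p : Polynomial F) {m i : ℕ} (hi : i ≤ m) :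
    (homog' p m).coeff i = Polynomial.C (p.coeff i) * Polynomial.X ^ (m - i) := by
  rw [homog', Polynomial.finset_sum_coeff]
  rw [Finset.sum_eq_single i]
  · rw [Polynomial.coeff_C_mul, Polynomial.coeff_X_pow, if_pos rfl, mul_one]
  · intro j hj hji
    rw [Polynomial.coeff_C_mul, Polynomial.coeff_X_pow, if_neg (Ne.symm hji), mul_zero]
  · intro h
    exact absurd (Finset.mem_range.2 (by omega)) h

lemma ι_homog (p : Polynomial F) (m : ℕ) :
    ι F (homog p m) = ∑ i ∈ Finset.range (m + 1),
      φ F (p.coeff i) * (RatFunc.C RatFunc.X : RatFunc (RatFunc F)) ^ i * RatFunc.X ^ (m - i) := by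
  rw [homog, map_sum]
  refine Finset.sum_congr rfl fun i _ => ?_
  simp only [map_mul, map_pow, ι_X, ι_C, RatFunc.algebraMap_C, RatFunc.algebraMap_X]
  rfl

lemma ι_homog' (p : Polynomial F) (m : ℕ) :
    ι F (homog' p m) = ∑ i ∈ Finset.range (m + 1),
      φ F (p.coeff i) * RatFunc.X ^ i * (RatFunc.C RatFunc.X : RatFunc (RatFunc F)) ^ (m - i) := by
  rw [homog', map_sum]
  refine Finset.sum_congr rfl fun i _ => ?_
  simp only [map_mul, map_pow, ι_X, ι_C, RatFunc.algebraMap_C, RatFunc.algebraMap_X]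
  rw [show (φ F) (p.coeff i) = RatFunc.C (RatFunc.C (p.coeff i)) from rfl]
  ring

end AlphaAux

namespace AlphaAux

variable {F : Type*} [Field F]

lemma eval₂_div_mul_pow (p : Polynomial F) {m : ℕ} (hm : p.natDegree < m + 1)
    {u v : RatFunc (RatFunc F)} (hv : v ≠ 0) :
    p.eval₂ (φ F) (u / v) * v ^ m
      = ∑ i ∈ Finset.range (m + 1), φ F (p.coeff i) * u ^ i * v ^ (m - i) := by
  rw [Polynomial.eval₂_eq_sum_range' (φ F) hm (u / v), Finset.sum_mul]
  refine Finset.sum_congr rfl fun i hi => ?_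
  simp only [Finset.mem_range] at hi
  have hiv : v ^ m = v ^ i * v ^ (m - i) := by
    rw [← pow_add]; congr 1; omega
  rw [div_pow, hiv]
  field_simp

/-- p(x/y)·y^m = ι(homog p m). -/
lemma eval₂_xy (p : Polynomial F) {m : ℕ} (hm : p.natDegree < m + 1) :
    p.eval₂ (φ F) ((RatFunc.C RatFunc.X : RatFunc (RatFunc F)) / RatFunc.X) * RatFunc.X ^ m
      = ι F (homog p m) := by
  rw [eval₂_div_mul_pow p hm RatFunc.X_ne_zero, ι_homog]

lemma CX_ne_zero : (RatFunc.C RatFunc.X : RatFunc (RatFunc F)) ≠ 0 := by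
  rw [← map_zero (RatFunc.C : RatFunc F →+* RatFunc (RatFunc F))]
  exact fun h => RatFunc.X_ne_zero ((RatFunc.C : RatFunc F →+* RatFunc (RatFunc F)).injective h)

/-- p(y/x)·x^m = ι(homog' p m). -/
lemma eval₂_yx (p : Polynomial F) {m : ℕ} (hm : p.natDegree < m + 1) :
    p.eval₂ (φ F) ((RatFunc.X : RatFunc (RatFunc F)) / RatFunc.C (RatFunc.X : RatFunc F))
      * (RatFunc.C (RatFunc.X : RatFunc F)) ^ m = ι F (homog' p m) := by
  rw [eval₂_div_mul_pow p hm CX_ne_zero, ι_homog']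

end AlphaAux

namespace AlphaAux

variable {F : Type*} [Field F]

lemma homog_ne_zero {p : Polynomial F} (hp : p ≠ 0) {m : ℕ} (hm : p.natDegree ≤ m) :
    homog p m ≠ 0 := by
  intro h
  have := homog_coeff p hm
  rw [h, Polynomial.coeff_zero] at this
  have hl : p.coeff p.natDegree ≠ 0 := Polynomial.leadingCoeff_ne_zero.2 hp
  rcases mul_eq_zero.1 this.symm with h' | h'
  · exact hl (Polynomial.C_eq_zero.1 h')
  · exact absurd h' (pow_ne_zero _ Polynomial.X_ne_zero)

lemma homog'_ne_zero {p : Polynomial F} (hp : p ≠ 0) {m : ℕ} (hm : p.natDegree ≤ m) :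
    homog' p m ≠ 0 := by
  intro h
  have := homog'_coeff p hm
  rw [h, Polynomial.coeff_zero] at this
  have hl : p.coeff p.natDegree ≠ 0 := Polynomial.leadingCoeff_ne_zero.2 hp
  rcases mul_eq_zero.1 this.symm with h' | h'
  · exact hl (Polynomial.C_eq_zero.1 h')
  · exact absurd h' (pow_ne_zero _ Polynomial.X_ne_zero)

lemma map_homog_coeff (p : Polynomial F) (d : F) {m i : ℕ} (hi : i ≤ m) :
    ((homog p m).map (Polynomial.evalRingHom d)).coeff (m - i) = p.coeff i * d ^ i := by
  rw [Polynomial.coeff_map, homog_coeff p hi]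
  simp

lemma map_homog'_coeff (p : Polynomial F) (d : F) {m i : ℕ} (hi : i ≤ m) :
    ((homog' p m).map (Polynomial.evalRingHom d)).coeff i = p.coeff i * d ^ (m - i) := by
  rw [Polynomial.coeff_map, homog'_coeff p hi]
  simp

lemma eq_zero_of_map_homog_eq_zero {p : Polynomial F} {d : F} (hd : d ≠ 0) {m : ℕ}
    (hm : p.natDegree ≤ m) (h : (homog p m).map (Polynomial.evalRingHom d) = 0) : p = 0 := by
  ext i
  rcases le_or_gt i m with hi | hi
  · have := map_homog_coeff p d hi
    rw [h, Polynomial.coeff_zero] at this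
    have := this.symm
    rcases mul_eq_zero.1 this with h' | h'
    · simpa using h'
    · exact absurd h' (pow_ne_zero i hd)
  · simp [Polynomial.coeff_eq_zero_of_natDegree_lt (lt_of_le_of_lt hm hi)]

lemma map_homog'_ne_zero {p : Polynomial F} (hp : p ≠ 0) {d : F} (hd : d ≠ 0) {m : ℕ}
    (hm : p.natDegree ≤ m) : (homog' p m).map (Polynomial.evalRingHom d) ≠ 0 := by
  intro h
  have := map_homog'_coeff p d hm
  rw [h, Polynomial.coeff_zero] at this
  rcases mul_eq_zero.1 this.symm with h' | h'
  · exact Polynomial.leadingCoeff_ne_zero.2 hp h'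
  · exact pow_ne_zero _ hd h'

lemma map_map_C (p : Polynomial F) (d : F) :
    (p.map (Polynomial.C : F →+* Polynomial F)).map (Polynomial.evalRingHom d) = p := by
  rw [Polynomial.map_map]
  have : (Polynomial.evalRingHom d).comp (Polynomial.C : F →+* Polynomial F) = RingHom.id F :=
    RingHom.ext fun a => by simp
  rw [this, Polynomial.map_id]

end AlphaAux

namespace AlphaAux

variable {F : Type*} [Field F]

lemma ι_ne_zero {z : Polynomial (Polynomial F)} (hz : z ≠ 0) : ι F z ≠ 0 := fun h =>
  hz (ι_injective (by simpa using h))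

end AlphaAux


open AlphaAux

/-- If a nonzero rational function α satisfies α(x)α(y) = α(x/y)α(y) + α(x)α(y/x)
(as an identity in F(x,y)), then α has no nonzero root: for d ≠ 0 at which α is defined,
α(d) ≠ 0. -/
theorem alpha_no_nonzero_root (F : Type*) [Field F] (α : RatFunc F) (hα : α ≠ 0)
    (hfe :
      let x : RatFunc (RatFunc F) := RatFunc.C RatFunc.X
      let y : RatFunc (RatFunc F) := RatFunc.X
      sub α x * sub α y = sub α (x / y) * sub α y + sub α x * sub α (y / x))
    (d : F) (hd : d ≠ 0) (hdef : Polynomial.eval d α.denom ≠ 0) :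
    RatFunc.eval (RingHom.id F) d α ≠ 0 := by
  intro h0
  set p := α.num with hp
  set q := α.denom with hq
  have hp0 : p ≠ 0 := RatFunc.num_ne_zero hα
  have hq0 : q ≠ 0 := RatFunc.denom_ne_zero α
  have hqd : q.eval d ≠ 0 := hdef
  -- p(d) = 0
  have hpd : p.eval d = 0 := by
    have h1 : p.eval d / q.eval d = 0 := h0
    rw [_root_.div_eq_zero_iff] at h1
    exact h1.resolve_right hqd
  set x : RatFunc (RatFunc F) := RatFunc.C RatFunc.X with hx
  set y : RatFunc (RatFunc F) := RatFunc.X with hy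
  have hfe2 : sub α x * sub α y = sub α (x / y) * sub α y + sub α x * sub α (y / x) := hfe
  have hsub : ∀ t : RatFunc (RatFunc F), sub α t = p.eval₂ (φ F) t / q.eval₂ (φ F) t :=
    fun t => rfl
  rw [hsub, hsub, hsub, hsub] at hfe2
  set m : ℕ := max p.natDegree q.natDegree with hm
  have hmp : p.natDegree < m + 1 := Nat.lt_succ_of_le (le_max_left _ _)
  have hmq : q.natDegree < m + 1 := Nat.lt_succ_of_le (le_max_right _ _)
  -- nonvanishing of the four denominators
  have hQx : q.eval₂ (φ F) x ≠ 0 := by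
    rw [hx, eval₂_at_x]
    exact ι_ne_zero (by simpa using Polynomial.C_ne_zero.2 hq0)
  have hQy : q.eval₂ (φ F) y ≠ 0 := by
    rw [hy, eval₂_at_y]
    exact ι_ne_zero fun h => hq0 (by simpa using h)
  have hQxy : q.eval₂ (φ F) (x / y) ≠ 0 := by
    intro hz
    have h1 := eval₂_xy q hmq
    rw [← hx, ← hy, hz, zero_mul] at h1
    exact ι_ne_zero (homog_ne_zero hq0 (le_max_right _ _)) h1.symm
  have hQyx : q.eval₂ (φ F) (y / x) ≠ 0 := by
    intro hz
    have h1 := eval₂_yx q hmq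
    rw [← hx, ← hy, hz, zero_mul] at h1
    exact ι_ne_zero (homog'_ne_zero hq0 (le_max_right _ _)) h1.symm
  -- clear denominators: the key polynomial identity in F[X][Y]
  have key : ι F (Polynomial.C p) * ι F (p.map Polynomial.C) * ι F (homog q m) * ι F (homog' q m)
      = ι F (homog p m) * ι F (p.map Polynomial.C) * ι F (Polynomial.C q) * ι F (homog' q m)
        + ι F (Polynomial.C p) * ι F (homog' p m) * ι F (q.map Polynomial.C) * ι F (homog q m) := by
    rw [← eval₂_at_x p, ← eval₂_at_x q, ← eval₂_at_y p, ← eval₂_at_y q,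
      ← eval₂_xy p hmp, ← eval₂_xy q hmq, ← eval₂_yx p hmp, ← eval₂_yx q hmq,
      ← hx, ← hy]
    have hx0 : x ≠ 0 := hx ▸ CX_ne_zero
    have hy0 : y ≠ 0 := hy ▸ RatFunc.X_ne_zero
    field_simp [hQx, hQy, hQxy, hQyx] at hfe2
    have hfe3 : eval₂ (φ F) x p * eval₂ (φ F) y p * (eval₂ (φ F) (x / y) q * eval₂ (φ F) (y / x) q)
        = eval₂ (φ F) (x / y) p * eval₂ (φ F) y p * (eval₂ (φ F) x q * eval₂ (φ F) (y / x) q)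
          + eval₂ (φ F) x p * eval₂ (φ F) (y / x) p * (eval₂ (φ F) (x / y) q * eval₂ (φ F) y q) := by
      apply mul_right_cancel₀ (mul_ne_zero hQx hQy)
      linear_combination (eval₂ (φ F) x q * eval₂ (φ F) y q) * hfe2
    linear_combination (x ^ m * y ^ m) * hfe3
  have keyA : Polynomial.C p * p.map Polynomial.C * homog q m * homog' q m
      = homog p m * p.map Polynomial.C * Polynomial.C q * homog' q m
        + Polynomial.C p * homog' p m * q.map Polynomial.C * homog q m := by
    apply ι_injective
    simpa only [map_mul, map_add] using key
  have keyB := congrArg (fun z => z.map (Polynomial.evalRingHom d)) keyA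
  simp only [Polynomial.map_mul, Polynomial.map_add, Polynomial.map_C, map_map_C,
    Polynomial.coe_evalRingHom, hpd, Polynomial.C_0, zero_mul, mul_zero, add_zero,
    zero_add] at keyB
  rcases mul_eq_zero.1 keyB.symm with h1 | h1
  · rcases mul_eq_zero.1 h1 with h2 | h2
    · rcases mul_eq_zero.1 h2 with h3 | h3
      · exact hp0 (eq_zero_of_map_homog_eq_zero hd (le_max_left _ _) h3)
      · exact hp0 h3
    · exact hqd (Polynomial.C_eq_zero.1 h2)
  · exact map_homog'_ne_zero hq0 hd (le_max_right _ _) h1
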